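/- arXiv:2212.12921 — 2 statements merged into one kernel-verified Lean document; each statement's English description precedes it below -/
import Mathlib

section
/- Let a ∈ ℝⁿ (with at least one nonzero coordinate) and k ≤ n. Then max over k-sparse vectors t ∈ ℝⁿ (i.e., ‖t‖₀ ≤ k) of { ⟨a,t⟩ − (1/2)‖t‖₂² } equals (1/2)·Σ_{i=1}^k a_{⟨i⟩}², where a_{⟨i⟩} is the i-th largest coordinate of a in absolute value. Moreover the maximum is attained by t equal to a restricted to the indices of the k largest absolute coordinates. -/
open Finset

noncomputable section
open scoped Classical BigOperators

/-- Keep only the entries of `θ` in the index set `s`, zero out the rest. -/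
def groupProj {n : ℕ} (s : Finset (Fin n)) (θ : Fin n → ℝ) : Fin n → ℝ :=
  fun i => if i ∈ s then θ i else 0

/-- Number of groups of `θ` (w.r.t. the groups `s`) that are nonzero. -/
def nnzGroups {n m : ℕ} (s : Fin m → Finset (Fin n)) (θ : Fin n → ℝ) : ℕ :=
  (Finset.univ.filter fun j => groupProj (s j) θ ≠ 0).card

/-- The indicator-augmented weighted group sparse function `gs_k`. -/
def gsk {n m : ℕ} (s : Fin m → Finset (Fin n)) (d : Fin m → ℝ) (k : ℕ)
    (θ : Fin n → ℝ) : EReal :=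
  if nnzGroups s θ ≤ k then
    (((1 : ℝ) / 2) * ∑ j, d j * ∑ i ∈ s j, (θ i) ^ 2 : ℝ) else ⊤

/-- Fenchel conjugate of an extended-real-valued function on `ℝⁿ`. -/
def fconj {n : ℕ} (f : (Fin n → ℝ) → EReal) (y : Fin n → ℝ) : EReal :=
  ⨆ θ : Fin n → ℝ, ((∑ i, y i * θ i : ℝ) : EReal) - f θ

/-- Perspective of the squared Euclidean norm. -/
def phi {n : ℕ} (v : Fin n → ℝ) (t : ℝ) : EReal :=
  if 0 < t then ((∑ i, (v i) ^ 2) / t : ℝ)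
  else if v = 0 ∧ t = 0 then (0 : EReal) else ⊤

/-- `ℓ₀` "norm": number of nonzero coordinates. -/
def l0norm {n : ℕ} (t : Fin n → ℝ) : ℕ :=
  (Finset.univ.filter fun i => t i ≠ 0).card

/-- The (unstructured) sparse function `s_k`. -/
def sparseFun {m : ℕ} (k : ℕ) (x : Fin m → ℝ) : EReal :=
  if l0norm x ≤ k then (((1 : ℝ) / 2) * ∑ i, (x i) ^ 2 : ℝ) else ⊤

/-- The constraint set `B_k`. -/
def Bk (m k : ℕ) : Set (Fin m → ℝ) :=
  {u | (∀ j, 0 ≤ u j ∧ u j ≤ 1) ∧ (∑ j, u j) ≤ (k : ℝ)}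

lemma card_filter_lt' {n k : ℕ} (hk : k ≤ n) :
    (univ.filter fun j : Fin n => (j:ℕ) < k).card = k := by
  have : (univ.filter fun j : Fin n => (j:ℕ) < k) = Finset.map (Fin.castLEEmb hk) univ := by
    ext j; simp [Fin.castLEEmb]
    constructor
    · intro h; exact ⟨⟨j, h⟩, rfl⟩
    · rintro ⟨x, rfl⟩; exact x.2
  rw [this]; simp

lemma key_sum_le {n k : ℕ} (hk : k ≤ n) (f : Fin n → ℝ) (hf : Antitone f)
    (hf0 : ∀ i, 0 ≤ f i) (U : Finset (Fin n)) (hU : U.card ≤ k) :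
    ∑ j ∈ U, f j ≤ ∑ j ∈ univ.filter (fun j : Fin n => (j:ℕ) < k), f j := by
  set F := univ.filter (fun j : Fin n => (j:ℕ) < k) with hF
  have hFcard : F.card = k := card_filter_lt' hk
  rcases eq_or_lt_of_le hk with heq | hlt
  · have hFu : F = univ := by
      apply Finset.eq_univ_of_card; rw [hFcard, heq, Fintype.card_fin]
    rw [hFu]
    exact Finset.sum_le_sum_of_subset_of_nonneg (subset_univ U) (fun i _ _ => hf0 i)
  · set c := f ⟨k, hlt⟩ with hc
    have hsplitU : ∑ j ∈ U ∩ F, f j + ∑ j ∈ U \ F, f j = ∑ j ∈ U, f j :=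
      Finset.sum_inter_add_sum_sdiff U F f
    have hsplitF : ∑ j ∈ F ∩ U, f j + ∑ j ∈ F \ U, f j = ∑ j ∈ F, f j :=
      Finset.sum_inter_add_sum_sdiff F U f
    have hcardA : (U \ F).card ≤ (F \ U).card := by
      have h1 : (U ∩ F).card + (U \ F).card = U.card := Finset.card_inter_add_card_sdiff U F
      have h2 : (F ∩ U).card + (F \ U).card = F.card := Finset.card_inter_add_card_sdiff F U
      have : (F ∩ U).card = (U ∩ F).card := by rw [Finset.inter_comm]
      omega
    have hA : ∑ j ∈ U \ F, f j ≤ (U \ F).card * c := by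
      calc ∑ j ∈ U \ F, f j ≤ ∑ _j ∈ U \ F, c := by
            refine Finset.sum_le_sum (fun i hi => ?_)
            simp only [Finset.mem_sdiff, hF, Finset.mem_filter, Finset.mem_univ, true_and] at hi
            exact hf (by simpa [Fin.le_def] using not_lt.mp hi.2)
        _ = (U \ F).card * c := by rw [Finset.sum_const, nsmul_eq_mul]
    have hB : ((F \ U).card : ℝ) * c ≤ ∑ j ∈ F \ U, f j := by
      calc ((F \ U).card : ℝ) * c = ∑ _j ∈ F \ U, c := by rw [Finset.sum_const, nsmul_eq_mul]
        _ ≤ ∑ j ∈ F \ U, f j := by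
            refine Finset.sum_le_sum (fun i hi => ?_)
            simp only [Finset.mem_sdiff, hF, Finset.mem_filter, Finset.mem_univ, true_and] at hi
            exact hf (by simp [Fin.le_def]; omega)
    have hc0 : 0 ≤ c := hf0 _
    have : ((U \ F).card : ℝ) * c ≤ ((F \ U).card : ℝ) * c := by
      apply mul_le_mul_of_nonneg_right _ hc0
      exact_mod_cast hcardA
    have hIC : ∑ j ∈ U ∩ F, f j = ∑ j ∈ F ∩ U, f j := by rw [Finset.inter_comm]
    linarith

/-- for `a ≠ 0`, the maximum of `⟨a,t⟩ - ½‖t‖₂²` over `k`-sparse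
vectors `t` equals half the sum of the `k` largest squared entries of `a` (in
absolute value), attained at `a` restricted to the `k` largest-in-absolute-value
coordinates. -/
theorem max_over_sparse {n : ℕ} (k : ℕ) (hk : k ≤ n)
    (a : Fin n → ℝ) (ha : a ≠ 0)
    (σ : Equiv.Perm (Fin n)) (hσ : Antitone fun i => |a (σ i)|) :
    IsGreatest
      {x : ℝ | ∃ t : Fin n → ℝ, l0norm t ≤ k ∧
        x = (∑ i, a i * t i) - (1 / 2) * ∑ i, (t i) ^ 2}
      ((1 / 2) * ∑ i ∈ Finset.univ.filter (fun i : Fin n => (i : ℕ) < k), (a (σ i)) ^ 2)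
    ∧ (l0norm (fun i => if ((σ.symm i : ℕ) < k) then a i else 0) ≤ k
      ∧ (∑ i, a i * (if ((σ.symm i : ℕ) < k) then a i else 0))
          - (1 / 2) * ∑ i, (if ((σ.symm i : ℕ) < k) then a i else 0) ^ 2
        = (1 / 2) * ∑ i ∈ Finset.univ.filter (fun i : Fin n => (i : ℕ) < k), (a (σ i)) ^ 2) := by
  set t0 : Fin n → ℝ := fun i => if ((σ.symm i : ℕ) < k) then a i else 0 with ht0
  set S : ℝ := ∑ i ∈ Finset.univ.filter (fun i : Fin n => (i : ℕ) < k), (a (σ i)) ^ 2 with hS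
  -- l0norm bound for t0
  have hl0 : l0norm t0 ≤ k := by
    unfold l0norm
    have hsub : (univ.filter fun i => t0 i ≠ 0) ⊆ (univ.filter fun i : Fin n => (σ.symm i : ℕ) < k) := by
      intro i hi
      simp only [Finset.mem_filter, Finset.mem_univ, true_and, ht0] at hi ⊢
      by_contra h
      exact hi (if_neg h)
    have hcard : (univ.filter fun i : Fin n => (σ.symm i : ℕ) < k).card
        = (univ.filter fun j : Fin n => (j : ℕ) < k).card := by
      apply Finset.card_bij' (fun i _ => σ.symm i) (fun j _ => σ j)
      · intro i hi; simp only [Finset.mem_filter, Finset.mem_univ, true_and] at hi ⊢; exact hi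
      · intro j hj; simp only [Finset.mem_filter, Finset.mem_univ, true_and] at hj ⊢; simpa using hj
      · intro i _; simp
      · intro j _; simp
    calc (univ.filter fun i => t0 i ≠ 0).card ≤ _ := Finset.card_le_card hsub
      _ = k := by rw [hcard, card_filter_lt' hk]
  -- value at t0
  have hsq : ∑ i, (t0 i) ^ 2 = S := by
    have h1 : ∀ i, (t0 i) ^ 2 = if (σ.symm i : ℕ) < k then a i ^ 2 else 0 := by
      intro i; by_cases h : (σ.symm i : ℕ) < k <;> simp [ht0, h]
    calc ∑ i, (t0 i) ^ 2 = ∑ i, (if (σ.symm i : ℕ) < k then a i ^ 2 else 0) := by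
          exact Finset.sum_congr rfl (fun i _ => h1 i)
      _ = ∑ j : Fin n, (if (j : ℕ) < k then a (σ j) ^ 2 else 0) := by
          refine Fintype.sum_equiv σ.symm _ _ (fun j => ?_); simp
      _ = S := by rw [hS, Finset.sum_filter]
  have hlin : ∑ i, a i * t0 i = S := by
    have h1 : ∀ i, a i * t0 i = if (σ.symm i : ℕ) < k then a i ^ 2 else 0 := by
      intro i; by_cases h : (σ.symm i : ℕ) < k <;> simp [ht0, h, sq]
    calc ∑ i, a i * t0 i = ∑ i, (if (σ.symm i : ℕ) < k then a i ^ 2 else 0) :=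
          Finset.sum_congr rfl (fun i _ => h1 i)
      _ = ∑ j : Fin n, (if (j : ℕ) < k then a (σ j) ^ 2 else 0) := by
          refine Fintype.sum_equiv σ.symm _ _ (fun j => ?_); simp
      _ = S := by rw [hS, Finset.sum_filter]
  have hval : (∑ i, a i * t0 i) - (1 / 2) * ∑ i, (t0 i) ^ 2 = (1/2) * S := by
    rw [hsq, hlin]; ring
  refine ⟨⟨⟨t0, hl0, hval.symm⟩, ?_⟩, hl0, hval⟩
  -- upper bound
  rintro x ⟨t, htl0, rfl⟩
  set T := univ.filter (fun i => t i ≠ 0) with hT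
  have step1 : (∑ i, a i * t i) - (1 / 2) * ∑ i, (t i) ^ 2
      = ∑ i ∈ T, (a i * t i - (1/2) * (t i)^2) := by
    rw [Finset.mul_sum, ← Finset.sum_sub_distrib]
    refine (Finset.sum_subset (Finset.filter_subset _ _) ?_).symm
    intro i _ hi
    simp only [hT, Finset.mem_filter, Finset.mem_univ, true_and, not_not] at hi
    simp [hi]
  have step2 : ∑ i ∈ T, (a i * t i - (1/2) * (t i)^2) ≤ ∑ i ∈ T, (1/2) * (a i)^2 := by
    refine Finset.sum_le_sum (fun i _ => ?_); nlinarith [sq_nonneg (a i - t i)]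
  have step3 : ∑ i ∈ T, (1/2) * (a i)^2 ≤ (1/2) * S := by
    rw [← Finset.mul_sum]
    have hre : ∑ i ∈ T, (a i)^2 = ∑ j ∈ T.image σ.symm, (a (σ j))^2 := by
      rw [Finset.sum_image (fun x _ y _ h => σ.symm.injective h)]
      exact Finset.sum_congr rfl (fun i _ => by simp)
    have hcard : (T.image σ.symm).card ≤ k := by
      rw [Finset.card_image_of_injective _ σ.symm.injective]; exact htl0
    have hanti : Antitone (fun j : Fin n => (a (σ j))^2) := by
      intro i j h
      have := hσ h
      simpa [sq_abs] using pow_le_pow_left₀ (abs_nonneg _) this 2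
    have := key_sum_le hk (fun j => (a (σ j))^2) hanti (fun i => sq_nonneg _) (T.image σ.symm) hcard
    rw [hre, hS]
    exact mul_le_mul_of_nonneg_left this (by norm_num)
  linarith
end
end

section
/- GS_k is a convex, nonnegative, lower semicontinuous function on ℝⁿ satisfying GS_k(θ) ≤ gs_k(θ) for all θ, and GS_k(θ) = gs_k(θ) = (1/2)Σ_j d_j‖θ_{s_j}‖₂² whenever θ has at most k nonzero groups... in particular GS_k(0) = 0. -/
open Finset

noncomputable section
open scoped Classical BigOperators

lemma ereal_sub_rev {a : ℝ} {x y : EReal} (h : (a : EReal) - y ≤ x) : (a : EReal) - x ≤ y := by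
  induction x with
  | bot =>
    induction y with
    | bot => simp_all
    | coe b => simp_all [← EReal.coe_sub]
    | top => simp
  | coe b =>
    induction y with
    | bot => simp_all [EReal.coe_sub_bot]
    | coe c =>
      rw [← EReal.coe_sub] at h ⊢
      rw [EReal.coe_le_coe_iff] at h ⊢
      linarith
    | top => exact le_top
  | top => simp [EReal.sub_top]

lemma le_fconj {n : ℕ} (f : (Fin n → ℝ) → EReal) (y θ : Fin n → ℝ) :
    ((∑ i, y i * θ i : ℝ) : EReal) - f θ ≤ fconj f y :=
  le_iSup (fun θ => ((∑ i, y i * θ i : ℝ) : EReal) - f θ) θ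

lemma fenchel_young {n : ℕ} (f : (Fin n → ℝ) → EReal) (θ y : Fin n → ℝ) :
    ((∑ i, θ i * y i : ℝ) : EReal) - fconj f y ≤ f θ := by
  have h := le_fconj f y θ
  have hcomm : (∑ i, θ i * y i : ℝ) = ∑ i, y i * θ i := by simp [mul_comm]
  rw [hcomm]
  exact ereal_sub_rev h

lemma biconj_le {n : ℕ} (f : (Fin n → ℝ) → EReal) (θ : Fin n → ℝ) :
    fconj (fconj f) θ ≤ f θ :=
  iSup_le fun y => fenchel_young f θ y

lemma fconj_lsc {n : ℕ} (f : (Fin n → ℝ) → EReal) : LowerSemicontinuous (fconj f) := by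
  have : fconj f = fun y => ⨆ θ : Fin n → ℝ, ((∑ i, y i * θ i : ℝ) : EReal) - f θ := rfl
  rw [this]
  apply lowerSemicontinuous_iSup
  intro θ
  cases hft : f θ with
  | bot =>
    have : (fun y : Fin n → ℝ => ((∑ i, y i * θ i : ℝ) : EReal) - ⊥)
        = fun _ => (⊤ : EReal) := by
      funext y; rw [EReal.coe_sub_bot]
    rw [this]; exact lowerSemicontinuous_const
  | top =>
    have : (fun y : Fin n → ℝ => ((∑ i, y i * θ i : ℝ) : EReal) - ⊤)
        = fun _ => (⊥ : EReal) := by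
      funext y; rw [EReal.sub_top]
    rw [this]; exact lowerSemicontinuous_const
  | coe c =>
    have : (fun y : Fin n → ℝ => ((∑ i, y i * θ i : ℝ) : EReal) - (c : EReal))
        = fun y => (((∑ i, y i * θ i) - c : ℝ) : EReal) := by
      funext y; rw [EReal.coe_sub]
    rw [this]
    apply Continuous.lowerSemicontinuous
    apply continuous_coe_real_ereal.comp
    exact (continuous_finset_sum _ fun i _ => (continuous_apply i).mul continuous_const).sub
      continuous_const

lemma fconj_convex {n : ℕ} (g : (Fin n → ℝ) → EReal) (hg : ∀ y, g y ≠ ⊥)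
    (θ θ' : Fin n → ℝ) (a b : ℝ) (ha : 0 ≤ a) (hb : 0 ≤ b) (hab : a + b = 1) :
    fconj g (a • θ + b • θ') ≤ ((a : ℝ) : EReal) * fconj g θ + ((b : ℝ) : EReal) * fconj g θ' := by
  apply iSup_le
  intro y
  set A : ℝ := ∑ i, θ i * y i with hA
  set B : ℝ := ∑ i, θ' i * y i with hB
  have hsum : (∑ i, (a • θ + b • θ') i * y i : ℝ) = a * A + b * B := by
    simp only [Pi.add_apply, Pi.smul_apply, smul_eq_mul, add_mul, Finset.sum_add_distrib,
      hA, hB, Finset.mul_sum, mul_assoc]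
  rw [hsum]
  cases hgy : g y with
  | bot => exact absurd hgy (hg y)
  | top => rw [EReal.sub_top]; exact bot_le
  | coe c =>
    have h1 : ((A : EReal) - (c : EReal)) ≤ fconj g θ := by
      have := le_fconj g θ y
      rw [hgy] at this
      simpa [hA, mul_comm] using this
    have h2 : ((B : EReal) - (c : EReal)) ≤ fconj g θ' := by
      have := le_fconj g θ' y
      rw [hgy] at this
      simpa [hB, mul_comm] using this
    have ha' : (0 : EReal) ≤ (a : EReal) := by exact_mod_cast ha
    have hb' : (0 : EReal) ≤ (b : EReal) := by exact_mod_cast hb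
    calc ((a * A + b * B : ℝ) : EReal) - (c : EReal)
        = ((a : ℝ) : EReal) * ((A - c : ℝ) : EReal) + ((b : ℝ) : EReal) * ((B - c : ℝ) : EReal) := by
          rw [← EReal.coe_mul, ← EReal.coe_mul, ← EReal.coe_add, ← EReal.coe_sub]
          norm_cast
          linear_combination c * hab
      _ ≤ ((a : ℝ) : EReal) * fconj g θ + ((b : ℝ) : EReal) * fconj g θ' := by
          gcongr
          · rw [EReal.coe_sub]; exact h1
          · rw [EReal.coe_sub]; exact h2

section GSK
variable {n m : ℕ} (k : ℕ) (s : Fin m → Finset (Fin n)) (d : Fin m → ℝ)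

lemma val_nonneg (hd : ∀ j, 0 < d j) (θ : Fin n → ℝ) :
    (0 : ℝ) ≤ ((1 : ℝ) / 2) * ∑ j, d j * ∑ i ∈ s j, (θ i) ^ 2 := by
  apply mul_nonneg (by norm_num)
  exact Finset.sum_nonneg fun j _ => mul_nonneg (hd j).le
    (Finset.sum_nonneg fun i _ => sq_nonneg _)

lemma gsk_nonneg (hd : ∀ j, 0 < d j) (θ : Fin n → ℝ) : (0 : EReal) ≤ gsk s d k θ := by
  unfold gsk
  split
  · exact_mod_cast val_nonneg s d hd θ
  · exact le_top

lemma gsk_ne_bot (hd : ∀ j, 0 < d j) (θ : Fin n → ℝ) : gsk s d k θ ≠ ⊥ :=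
  fun h => absurd (h ▸ gsk_nonneg k s d hd θ) (by simp)

lemma nnz_zero : nnzGroups s (0 : Fin n → ℝ) = 0 := by
  unfold nnzGroups
  rw [Finset.card_eq_zero, Finset.filter_eq_empty_iff]
  intro j _
  rw [not_ne_iff]
  funext i
  simp [groupProj]

lemma gsk_zero : gsk s d k 0 = 0 := by
  unfold gsk
  rw [if_pos (by rw [nnz_zero]; exact Nat.zero_le k)]
  norm_num

lemma fconj_gsk_nonneg (hd : ∀ j, 0 < d j) (y : Fin n → ℝ) :
    (0 : EReal) ≤ fconj (gsk s d k) y := by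
  have h := le_fconj (gsk s d k) y 0
  simpa [gsk_zero] using h

lemma fconj_gsk_zero (hd : ∀ j, 0 < d j) : fconj (gsk s d k) 0 = 0 := by
  apply le_antisymm
  · apply iSup_le
    intro θ
    have : (∑ i, (0 : Fin n → ℝ) i * θ i : ℝ) = 0 := by simp
    rw [this]
    calc ((0 : ℝ) : EReal) - gsk s d k θ ≤ ((0 : ℝ) : EReal) - 0 :=
          EReal.sub_le_sub (le_refl _) (gsk_nonneg k s d hd θ)
      _ = 0 := by norm_num
  · exact fconj_gsk_nonneg k s d hd 0

end GSK

section Main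
variable {n m : ℕ}

lemma sum_partition (s : Fin m → Finset (Fin n))
    (hdisj : ∀ j j', j ≠ j' → Disjoint (s j) (s j'))
    (hcover : ∀ i, ∃ j, i ∈ s j) (F : Fin n → ℝ) :
    ∑ i, F i = ∑ j, ∑ i ∈ s j, F i := by
  have huniv : (Finset.univ : Finset (Fin n)) = Finset.univ.biUnion s := by
    ext i
    simp only [Finset.mem_univ, Finset.mem_biUnion, true_iff]
    obtain ⟨j, hj⟩ := hcover i
    exact ⟨j, trivial, hj⟩
  rw [huniv, Finset.sum_biUnion]
  intro j _ j' _ hjj'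
  exact hdisj j j' hjj'

lemma group_of_mem (s : Fin m → Finset (Fin n))
    (hdisj : ∀ j j', j ≠ j' → Disjoint (s j) (s j'))
    {i : Fin n} {j j' : Fin m} (hi : i ∈ s j) (hi' : i ∈ s j') : j = j' := by
  by_contra h
  exact (Finset.disjoint_left.mp (hdisj j j' h)) hi hi'

lemma fconj_gsk_at (k : ℕ) (s : Fin m → Finset (Fin n))
    (hdisj : ∀ j j', j ≠ j' → Disjoint (s j) (s j'))
    (hcover : ∀ i, ∃ j, i ∈ s j) (d : Fin m → ℝ) (hd : ∀ j, 0 < d j)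
    (θ : Fin n → ℝ) (hθ : nnzGroups s θ ≤ k) :
    fconj (gsk s d k) (fun i => d ((hcover i).choose) * θ i)
      = ((((1 : ℝ) / 2) * ∑ j, d j * ∑ i ∈ s j, (θ i) ^ 2 : ℝ) : EReal) := by
  set g : Fin n → Fin m := fun i => (hcover i).choose with hgdef
  have hg : ∀ i, i ∈ s (g i) := fun i => (hcover i).choose_spec
  have hgj : ∀ j, ∀ i ∈ s j, g i = j := fun j i hi => group_of_mem s hdisj (hg i) hi
  set y : Fin n → ℝ := fun i => d (g i) * θ i with hydef
  set C : ℝ := ((1 : ℝ) / 2) * ∑ j, d j * ∑ i ∈ s j, (θ i) ^ 2 with hC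
  have hyθ' : ∀ θ' : Fin n → ℝ, (∑ i, y i * θ' i : ℝ) = ∑ j, d j * ∑ i ∈ s j, θ i * θ' i := by
    intro θ'
    rw [sum_partition s hdisj hcover]
    apply Finset.sum_congr rfl
    intro j _
    rw [Finset.mul_sum]
    apply Finset.sum_congr rfl
    intro i hi
    rw [hydef]
    simp only
    rw [hgj j i hi]
    ring
  -- AM-GM bound
  have hamgm : ∀ θ' : Fin n → ℝ, (∑ i, y i * θ' i : ℝ)
      ≤ C + ((1 : ℝ) / 2) * ∑ j, d j * ∑ i ∈ s j, (θ' i) ^ 2 := by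
    intro θ'
    rw [hyθ', hC, ← mul_add, ← Finset.sum_add_distrib]
    have : ∑ j, (d j * ∑ i ∈ s j, (θ i) ^ 2 + d j * ∑ i ∈ s j, (θ' i) ^ 2)
        = ∑ j, d j * ∑ i ∈ s j, ((θ i) ^ 2 + (θ' i) ^ 2) := by
      apply Finset.sum_congr rfl
      intro j _
      rw [← mul_add, ← Finset.sum_add_distrib]
    rw [this, Finset.mul_sum]
    apply Finset.sum_le_sum
    intro j _
    rw [← mul_assoc, mul_comm ((1:ℝ)/2), mul_assoc]
    apply mul_le_mul_of_nonneg_left _ (hd j).le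
    rw [Finset.mul_sum]
    apply Finset.sum_le_sum
    intro i _
    nlinarith [sq_nonneg (θ i - θ' i)]
  have hval : (∑ i, y i * θ i : ℝ) = 2 * C := by
    rw [hyθ', hC]
    have h2 : ∀ j : Fin m, ∑ i ∈ s j, θ i * θ i = ∑ i ∈ s j, (θ i) ^ 2 :=
      fun j => Finset.sum_congr rfl fun i _ => (sq (θ i)).symm
    rw [Finset.sum_congr rfl fun j _ => by rw [h2 j]]
    ring
  apply le_antisymm
  · apply iSup_le
    intro θ'
    unfold gsk
    split
    · rw [← EReal.coe_sub, EReal.coe_le_coe_iff]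
      have := hamgm θ'
      linarith
    · rw [EReal.sub_top]; exact bot_le
  · have h := le_fconj (gsk s d k) y θ
    have hfθ : gsk s d k θ = (C : EReal) := by
      unfold gsk
      rw [if_pos hθ]
    rw [hval, hfθ, ← EReal.coe_sub] at h
    have : (2 * C - C : ℝ) = C := by ring
    rw [this] at h
    exact h

lemma biconj_gsk_at (k : ℕ) (s : Fin m → Finset (Fin n))
    (hdisj : ∀ j j', j ≠ j' → Disjoint (s j) (s j'))
    (hcover : ∀ i, ∃ j, i ∈ s j) (d : Fin m → ℝ) (hd : ∀ j, 0 < d j)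
    (θ : Fin n → ℝ) (hθ : nnzGroups s θ ≤ k) :
    fconj (fconj (gsk s d k)) θ
      = ((((1 : ℝ) / 2) * ∑ j, d j * ∑ i ∈ s j, (θ i) ^ 2 : ℝ) : EReal) := by
  set C : ℝ := ((1 : ℝ) / 2) * ∑ j, d j * ∑ i ∈ s j, (θ i) ^ 2 with hC
  apply le_antisymm
  · have h := biconj_le (gsk s d k) θ
    rwa [show gsk s d k θ = (C : EReal) from by unfold gsk; rw [if_pos hθ]] at h
  · set y : Fin n → ℝ := fun i => d ((hcover i).choose) * θ i with hydef
    have h := le_fconj (fconj (gsk s d k)) θ y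
    rw [fconj_gsk_at k s hdisj hcover d hd θ hθ] at h
    have hval : (∑ i, θ i * y i : ℝ) = 2 * C := by
      have hg : ∀ i, i ∈ s ((hcover i).choose) := fun i => (hcover i).choose_spec
      have hgj : ∀ j, ∀ i ∈ s j, (hcover i).choose = j :=
        fun j i hi => group_of_mem s hdisj (hg i) hi
      rw [sum_partition s hdisj hcover, hC]
      have : ∀ j : Fin m, ∑ i ∈ s j, θ i * y i = d j * ∑ i ∈ s j, (θ i) ^ 2 := by
        intro j
        rw [Finset.mul_sum]
        apply Finset.sum_congr rfl
        intro i hi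
        rw [hydef]
        simp only
        rw [hgj j i hi]
        ring
      rw [Finset.sum_congr rfl fun j _ => this j]
      ring
    rw [hval, ← EReal.coe_sub, show (2 * C - C : ℝ) = C from by ring] at h
    exact h

end Main

/-- `GS_k = gs_k**` is convex, nonnegative, lower semicontinuous,
minorizes `gs_k`, agrees with `gs_k` on vectors with at most `k` nonzero
groups, and vanishes at the origin. -/
theorem gsk_biconj_properties {n m : ℕ} (k : ℕ) (hk1 : 1 ≤ k) (hkm : k ≤ m)
    (s : Fin m → Finset (Fin n))
    (hdisj : ∀ j j', j ≠ j' → Disjoint (s j) (s j'))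
    (hcover : ∀ i, ∃ j, i ∈ s j)
    (d : Fin m → ℝ) (hd : ∀ j, 0 < d j) :
    (∀ (θ θ' : Fin n → ℝ) (a b : ℝ), 0 ≤ a → 0 ≤ b → a + b = 1 →
        fconj (fconj (gsk s d k)) (a • θ + b • θ')
          ≤ ((a : ℝ) : EReal) * fconj (fconj (gsk s d k)) θ
            + ((b : ℝ) : EReal) * fconj (fconj (gsk s d k)) θ')
    ∧ (∀ θ, (0 : EReal) ≤ fconj (fconj (gsk s d k)) θ)
    ∧ LowerSemicontinuous (fconj (fconj (gsk s d k)))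
    ∧ (∀ θ, fconj (fconj (gsk s d k)) θ ≤ gsk s d k θ)
    ∧ (∀ θ, nnzGroups s θ ≤ k →
        fconj (fconj (gsk s d k)) θ
          = ((((1 : ℝ) / 2) * ∑ j, d j * ∑ i ∈ s j, (θ i) ^ 2 : ℝ) : EReal))
    ∧ fconj (fconj (gsk s d k)) 0 = 0 := by
  have hnonneg : ∀ θ, (0 : EReal) ≤ fconj (fconj (gsk s d k)) θ := by
    intro θ
    have h := le_fconj (fconj (gsk s d k)) θ 0
    rw [fconj_gsk_zero k s d hd] at h
    simpa using h
  refine ⟨?_, hnonneg, fconj_lsc _, biconj_le _, ?_, ?_⟩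
  · intro θ θ' a b ha hb hab
    exact fconj_convex (fconj (gsk s d k))
      (fun y => fun h => absurd (h ▸ fconj_gsk_nonneg k s d hd y) (by simp))
      θ θ' a b ha hb hab
  · intro θ hθ
    exact biconj_gsk_at k s hdisj hcover d hd θ hθ
  · have h := biconj_gsk_at k s hdisj hcover d hd 0 (by rw [nnz_zero]; exact Nat.zero_le k)
    rw [h]
    norm_num
end
end
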